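/- Let n ≥ 4 be a natural number and φ a real number with 1 ≤ φ < log n / log log n. Set a = ⌈φ·log n / (log n − φ·log φ)⌉ and q = φ / n^{1/φ}. Let n̂ be an integer with 1 ≤ n̂ ≤ n and let X₁, …, X_{n̂} be independent geometric random variables with parameter q (paper's convention), and define Y_i = min(X_i, a). Then with probability at least 1 − 2/n² there exists an integer y ∈ {1, …, a} such that the number of indices i with Y_i = y is at least 1 and at most (12/φ)·n^{1/φ}·ln n. (Lemma 2 of the paper.) -/

import Mathlib

open MeasureTheory ProbabilityTheory


lemma sum_powerset_pow {m : ℕ} (γ δ : ℝ) :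
    ∑ S ∈ (Finset.univ : Finset (Fin m)).powerset, γ ^ S.card * δ ^ (m - S.card)
      = (γ + δ) ^ m := by
  classical
  have h := Finset.prod_add (fun _ : Fin m => γ) (fun _ : Fin m => δ) Finset.univ
  rw [Finset.prod_const, Finset.card_univ, Fintype.card_fin] at h
  rw [h]
  refine Finset.sum_congr rfl fun t ht => ?_
  rw [Finset.prod_const, Finset.prod_const,
    Finset.card_sdiff_of_subset (Finset.subset_univ t), Finset.card_univ, Fintype.card_fin]

lemma count_event_bound {Ω : Type*} [MeasurableSpace Ω] (μ : Measure Ω) [IsProbabilityMeasure μ]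
    {m : ℕ} (X : Fin m → Ω → ℕ) (hmeas : ∀ i, Measurable (X i))
    (hind : iIndepFun X μ)
    (A B : Set ℕ) [DecidablePred (· ∈ A)] (hAB : ∀ x, x ∈ A → x ∉ B)
    {α β : ℝ} (hα0 : 0 ≤ α) (hβ0 : 0 ≤ β)
    (hα : ∀ i, μ (X i ⁻¹' A) = ENNReal.ofReal α) (hβ : ∀ i, μ (X i ⁻¹' B) = ENNReal.ofReal β)
    (K : ℕ) {ε γ δ : ℝ} (hγ0 : 0 ≤ γ) (hδ0 : 0 ≤ δ) (hε0 : 0 ≤ ε)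
    (hmaj : ∀ k, K ≤ k → k ≤ m → α ^ k * β ^ (m - k) ≤ ε * (γ ^ k * δ ^ (m - k))) :
    μ {ω | K ≤ (Finset.univ.filter (fun i => X i ω ∈ A)).card ∧ ∀ i, X i ω ∈ A ∪ B}
      ≤ ENNReal.ofReal (ε * (γ + δ) ^ m) := by
  classical
  set T := (Finset.univ : Finset (Fin m)).powerset.filter (fun S => K ≤ S.card) with hT
  set AS : Finset (Fin m) → Set Ω := fun S => ⋂ i, X i ⁻¹' (if i ∈ S then A else B) with hAS
  have hset : {ω | K ≤ (Finset.univ.filter (fun i => X i ω ∈ A)).card ∧ ∀ i, X i ω ∈ A ∪ B}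
      = ⋃ S ∈ T, AS S := by
    ext ω
    simp only [Set.mem_setOf_eq, Set.mem_iUnion, hAS, Set.mem_iInter, Set.mem_preimage, hT,
      Finset.mem_filter, Finset.mem_powerset]
    constructor
    · rintro ⟨hK, hall⟩
      refine ⟨Finset.univ.filter (fun i => X i ω ∈ A), ⟨Finset.subset_univ _, hK⟩, fun i => ?_⟩
      by_cases h : i ∈ Finset.univ.filter (fun i => X i ω ∈ A)
      · rw [if_pos h]; exact (Finset.mem_filter.mp h).2
      · rw [if_neg h]
        have hnA : X i ω ∉ A := fun hA => h (Finset.mem_filter.mpr ⟨Finset.mem_univ _, hA⟩)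
        rcases hall i with h' | h'
        · exact absurd h' hnA
        · exact h'
    · rintro ⟨S, ⟨-, hSK⟩, hS⟩
      constructor
      · refine le_trans hSK (Finset.card_le_card fun i hi => ?_)
        have h := hS i; rw [if_pos hi] at h
        exact Finset.mem_filter.mpr ⟨Finset.mem_univ _, h⟩
      · intro i
        by_cases h : i ∈ S
        · have h' := hS i; rw [if_pos h] at h'; exact Or.inl h'
        · have h' := hS i; rw [if_neg h] at h'; exact Or.inr h'
  have hmeasAS : ∀ S, MeasurableSet (AS S) :=
    fun S => MeasurableSet.iInter fun i => (hmeas i) .of_discrete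
  have hdisj : (↑T : Set (Finset (Fin m))).PairwiseDisjoint AS := by
    intro S hS S' hS' hne
    refine Set.disjoint_left.mpr fun ω h1 h2 => hne (Finset.ext fun i => ?_)
    have hi1 := Set.mem_iInter.mp h1 i
    have hi2 := Set.mem_iInter.mp h2 i
    constructor
    · intro h; by_contra h'
      rw [Set.mem_preimage, if_pos h] at hi1
      rw [Set.mem_preimage, if_neg h'] at hi2
      exact hAB _ hi1 hi2
    · intro h; by_contra h'
      rw [Set.mem_preimage, if_pos h] at hi2
      rw [Set.mem_preimage, if_neg h'] at hi1
      exact hAB _ hi2 hi1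
  have hASmeasure : ∀ S : Finset (Fin m),
      μ (AS S) = ENNReal.ofReal (α ^ S.card * β ^ (m - S.card)) := by
    intro S
    have hprod := hind.meas_iInter (s := fun i => X i ⁻¹' (if i ∈ S then A else B))
      (fun i => ⟨if i ∈ S then A else B, .of_discrete, rfl⟩)
    calc μ (AS S) = ∏ i, μ (X i ⁻¹' (if i ∈ S then A else B)) := hprod
      _ = ∏ i, (if i ∈ S then ENNReal.ofReal α else ENNReal.ofReal β) := by
          refine Finset.prod_congr rfl fun i _ => ?_
          by_cases h : i ∈ S <;> simp [h, hα i, hβ i]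
      _ = ENNReal.ofReal α ^ S.card * ENNReal.ofReal β ^ (m - S.card) := by
          rw [Finset.prod_ite, Finset.prod_const, Finset.prod_const]
          congr 2
          · rw [Finset.filter_mem_eq_inter, Finset.univ_inter]
          · rw [← Finset.sdiff_eq_filter, Finset.card_sdiff_of_subset (Finset.subset_univ S),
              Finset.card_univ, Fintype.card_fin]
      _ = ENNReal.ofReal (α ^ S.card * β ^ (m - S.card)) := by
          rw [← ENNReal.ofReal_pow hα0, ← ENNReal.ofReal_pow hβ0,
            ← ENNReal.ofReal_mul (by positivity)]
  rw [hset, measure_biUnion_finset hdisj (fun S _ => hmeasAS S)]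
  calc ∑ S ∈ T, μ (AS S)
      ≤ ∑ S ∈ T, ENNReal.ofReal (ε * (γ ^ S.card * δ ^ (m - S.card))) := by
        refine Finset.sum_le_sum fun S hS => ?_
        rw [hASmeasure S]
        have hSm : S.card ≤ m := by simpa using Finset.card_le_univ S
        exact ENNReal.ofReal_le_ofReal (hmaj S.card (Finset.mem_filter.mp hS).2 hSm)
    _ ≤ ∑ S ∈ (Finset.univ : Finset (Fin m)).powerset,
          ENNReal.ofReal (ε * (γ ^ S.card * δ ^ (m - S.card))) :=
        Finset.sum_le_sum_of_subset (Finset.filter_subset _ _)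
    _ = ENNReal.ofReal (∑ S ∈ (Finset.univ : Finset (Fin m)).powerset,
          ε * (γ ^ S.card * δ ^ (m - S.card))) :=
        (ENNReal.ofReal_sum_of_nonneg (fun S _ => by positivity)).symm
    _ = ENNReal.ofReal (ε * (γ + δ) ^ m) := by
        rw [← Finset.mul_sum, sum_powerset_pow]


lemma geo_zero {Ω : Type*} [MeasurableSpace Ω] (μ : Measure Ω) [IsProbabilityMeasure μ]
    (Z : Ω → ℕ) (hZ : Measurable Z) {q : ℝ} (hq0 : 0 < q) (hq1 : q < 1)
    (hg : ∀ j : ℕ, 1 ≤ j → μ (Z ⁻¹' {j}) = ENNReal.ofReal ((1 - q) * q ^ (j - 1))) :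
    μ (Z ⁻¹' {0}) = 0 := by
  have hsing : ∀ j : ℕ, MeasurableSet (Z ⁻¹' ({j} : Set ℕ)) := fun j => hZ .of_discrete
  have hU : Z ⁻¹' Set.Ici 1 = ⋃ j : ℕ, Z ⁻¹' {j + 1} := by
    ext ω
    simp only [Set.mem_preimage, Set.mem_Ici, Set.mem_iUnion, Set.mem_singleton_iff]
    constructor
    · intro h; exact ⟨Z ω - 1, by omega⟩
    · rintro ⟨j, hj⟩; omega
  have hdisj : Pairwise (Function.onFun Disjoint fun j : ℕ => Z ⁻¹' {j + 1}) := by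
    intro j k hjk
    refine Set.disjoint_left.mpr fun ω h1 h2 => hjk ?_
    simp only [Set.mem_preimage, Set.mem_singleton_iff] at h1 h2
    omega
  have hm : μ (Z ⁻¹' Set.Ici 1) = 1 := by
    rw [hU, measure_iUnion hdisj (fun j => hsing _)]
    have h1 : ∀ j : ℕ, μ (Z ⁻¹' {j + 1}) = ENNReal.ofReal ((1 - q) * q ^ j) := by
      intro j
      simpa using hg (j + 1) (by omega)
    simp only [h1]
    rw [← ENNReal.ofReal_tsum_of_nonneg (fun j => mul_nonneg (by linarith) (by positivity))
      ((summable_geometric_of_lt_one hq0.le hq1).mul_left _)]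
    rw [tsum_mul_left, tsum_geometric_of_lt_one hq0.le hq1,
      mul_inv_cancel₀ (by linarith), ENNReal.ofReal_one]
  have hcompl : Z ⁻¹' {0} = (Z ⁻¹' Set.Ici 1)ᶜ := by
    ext ω
    simp only [Set.mem_preimage, Set.mem_singleton_iff, Set.mem_compl_iff, Set.mem_Ici]
    omega
  rw [hcompl, measure_compl (hZ .of_discrete) (measure_ne_top μ _), measure_univ, hm, tsub_self]

lemma geo_lt {Ω : Type*} [MeasurableSpace Ω] (μ : Measure Ω) [IsProbabilityMeasure μ]
    (Z : Ω → ℕ) (hZ : Measurable Z) {q : ℝ} (hq0 : 0 < q) (hq1 : q < 1)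
    (hg : ∀ j : ℕ, 1 ≤ j → μ (Z ⁻¹' {j}) = ENNReal.ofReal ((1 - q) * q ^ (j - 1)))
    (y : ℕ) (hy : 1 ≤ y) :
    μ (Z ⁻¹' Set.Iio y) = ENNReal.ofReal (1 - q ^ (y - 1)) := by
  have hsing : ∀ j : ℕ, MeasurableSet (Z ⁻¹' ({j} : Set ℕ)) := fun j => hZ .of_discrete
  obtain ⟨k, rfl⟩ : ∃ k, y = k + 1 := ⟨y - 1, by omega⟩
  have hU : Z ⁻¹' Set.Iio (k + 1) = ⋃ j ∈ Finset.range (k + 1), Z ⁻¹' {j} := by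
    ext ω
    simp only [Set.mem_preimage, Set.mem_Iio, Set.mem_iUnion, Set.mem_singleton_iff,
      Finset.mem_range]
    exact ⟨fun h => ⟨Z ω, h, rfl⟩, fun ⟨j, hj, he⟩ => he ▸ hj⟩
  have hdisj : (↑(Finset.range (k + 1)) : Set ℕ).PairwiseDisjoint
      (fun j : ℕ => Z ⁻¹' {j}) := by
    intro i hi j hj hij
    refine Set.disjoint_left.mpr fun ω h1 h2 => hij ?_
    simp only [Set.mem_preimage, Set.mem_singleton_iff] at h1 h2
    omega
  rw [hU, measure_biUnion_finset hdisj (fun j _ => hsing j), Finset.sum_range_succ',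
    geo_zero μ Z hZ hq0 hq1 hg, add_zero]
  have h1 : ∀ j ∈ Finset.range k, μ (Z ⁻¹' {j + 1}) = ENNReal.ofReal ((1 - q) * q ^ j) := by
    intro j _
    simpa using hg (j + 1) (by omega)
  have hgeo : ∑ j ∈ Finset.range k, (1 - q) * q ^ j = 1 - q ^ k := by
    rw [← Finset.mul_sum]
    linear_combination (-1 : ℝ) * geom_sum_mul q k
  rw [Finset.sum_congr rfl h1,
    ← ENNReal.ofReal_sum_of_nonneg (fun j _ => mul_nonneg (by linarith) (by positivity)), hgeo]
  norm_num

lemma geo_ge {Ω : Type*} [MeasurableSpace Ω] (μ : Measure Ω) [IsProbabilityMeasure μ]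
    (Z : Ω → ℕ) (hZ : Measurable Z) {q : ℝ} (hq0 : 0 < q) (hq1 : q < 1)
    (hg : ∀ j : ℕ, 1 ≤ j → μ (Z ⁻¹' {j}) = ENNReal.ofReal ((1 - q) * q ^ (j - 1)))
    (y : ℕ) (hy : 1 ≤ y) :
    μ (Z ⁻¹' Set.Ici y) = ENNReal.ofReal (q ^ (y - 1)) := by
  have hc : Z ⁻¹' Set.Ici y = (Z ⁻¹' Set.Iio y)ᶜ := by
    ext ω
    simp only [Set.mem_preimage, Set.mem_Ici, Set.mem_compl_iff, Set.mem_Iio, not_lt]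
  have hle : q ^ (y - 1) ≤ 1 := pow_le_one₀ hq0.le hq1.le
  rw [hc, measure_compl (hZ .of_discrete) (measure_ne_top μ _), measure_univ,
    geo_lt μ Z hZ hq0 hq1 hg y hy]
  refine ENNReal.sub_eq_of_eq_add (by simp) ?_
  rw [← ENNReal.ofReal_add (by positivity) (by linarith), ← ENNReal.ofReal_one]
  congr 1
  ring


set_option maxHeartbeats 1000000 in
/-- Lemma 2 of the paper: let `n ≥ 4`, `1 ≤ φ < log n / log log n`
(logs base 2), `a = ⌈φ·log n / (log n − φ·log φ)⌉`, `q = φ / n^(1/φ)`, and let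
`X₁, …, X_n̂` (`1 ≤ n̂ ≤ n`) be independent `Geo(q)` random variables
(`P(X = j) = (1−q)·q^(j−1)` for `j ≥ 1`).  Setting `Yᵢ = min(Xᵢ, a)`, with
probability at least `1 − 2/n²` some value `y ∈ {1, …, a}` is taken by at
least `1` and at most `(12/φ)·n^(1/φ)·ln n` of the variables `Yᵢ`. -/
theorem geometric_level_choice (n : ℕ) (hn : 4 ≤ n) (φ : ℝ) (hφ1 : 1 ≤ φ)
    (hφ2 : φ < Real.logb 2 n / Real.logb 2 (Real.logb 2 n))
    (a : ℕ) (ha : a = ⌈φ * Real.logb 2 n / (Real.logb 2 n - φ * Real.logb 2 φ)⌉₊)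
    (q : ℝ) (hq : q = φ / (n : ℝ) ^ (1 / φ))
    (nhat : ℕ) (hnhat1 : 1 ≤ nhat) (hnhat2 : nhat ≤ n)
    (Ω : Type*) [MeasurableSpace Ω] (μ : Measure Ω) [IsProbabilityMeasure μ]
    (X : Fin nhat → Ω → ℕ) (hmeas : ∀ i, Measurable (X i))
    (hind : iIndepFun X μ)
    (hgeom : ∀ (i : Fin nhat) (j : ℕ), 1 ≤ j →
      μ {ω | X i ω = j} = ENNReal.ofReal ((1 - q) * q ^ (j - 1))) :
    1 - ENNReal.ofReal (2 / (n : ℝ) ^ 2) ≤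
      μ {ω | ∃ y : ℕ, 1 ≤ y ∧ y ≤ a ∧
        1 ≤ (Finset.univ.filter (fun i : Fin nhat => min (X i ω) a = y)).card ∧
        ((Finset.univ.filter (fun i : Fin nhat => min (X i ω) a = y)).card : ℝ) ≤
          12 / φ * (n : ℝ) ^ (1 / φ) * Real.log n} := by
  classical
  have hb2 : (1:ℝ) < 2 := one_lt_two
  have hn4R : (4:ℝ) ≤ (n:ℝ) := by exact_mod_cast hn
  have hn0 : (0:ℝ) < (n:ℝ) := by linarith
  set L := Real.logb 2 (n:ℝ) with hLdef
  set l := Real.logb 2 L with hldef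
  have h42 : Real.logb 2 (4:ℝ) = 2 := by
    rw [show (4:ℝ) = 2 ^ (2:ℕ) by norm_num, Real.logb_pow, Real.logb_self_eq_one hb2]
    norm_num
  have hL2 : 2 ≤ L := by
    rw [← h42, hLdef]; exact Real.logb_le_logb_of_le hb2 (by norm_num) hn4R
  have hL0 : 0 < L := by linarith
  have hl1 : 1 ≤ l := by
    rw [hldef, ← Real.logb_self_eq_one hb2]
    exact Real.logb_le_logb_of_le hb2 (by norm_num) hL2
  have hl0 : 0 < l := by linarith
  have hφ0 : 0 < φ := by linarith
  have hφl : φ * l < L := (lt_div_iff₀ hl0).mp hφ2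
  have hlogφ0 : 0 ≤ Real.logb 2 φ := Real.logb_nonneg hb2 hφ1
  have hlogφ : Real.logb 2 φ < l - Real.logb 2 l := by
    have h1 : Real.logb 2 φ < Real.logb 2 (L / l) := Real.logb_lt_logb hb2 hφ0 hφ2
    rwa [Real.logb_div (ne_of_gt hL0) (ne_of_gt hl0)] at h1
  have hlogl0 : 0 ≤ Real.logb 2 l := Real.logb_nonneg hb2 hl1
  have hdpos : φ * Real.logb 2 φ < L := by
    have h1 := mul_lt_mul_of_pos_left hlogφ hφ0
    have h2 := mul_nonneg hφ0.le hlogl0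
    nlinarith only [h1, h2, hφl]
  set d := L - φ * Real.logb 2 φ with hddef
  have hd0 : 0 < d := by rw [hddef]; linarith
  have hx0 : 0 < φ * L / d := div_pos (mul_pos hφ0 hL0) hd0
  have ha1 : 1 ≤ a := by rw [ha]; exact Nat.ceil_pos.mpr hx0
  have haLB : φ * L / d ≤ (a:ℝ) := by rw [ha]; exact Nat.le_ceil _
  have hnpow0 : (0:ℝ) < (n:ℝ) ^ (1/φ) := Real.rpow_pos_of_pos hn0 _
  have hq0 : 0 < q := by rw [hq]; positivity
  have hlogn_pow : Real.logb 2 ((n:ℝ) ^ (1/φ)) = L / φ := by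
    rw [Real.logb_rpow_eq_mul_logb_of_pos hn0, ← hLdef]; ring
  have hlogq : Real.logb 2 q = -(d / φ) := by
    rw [hq, Real.logb_div (ne_of_gt hφ0) (ne_of_gt hnpow0), hlogn_pow, hddef]
    field_simp
    ring
  have hq1 : q < 1 := by
    have h1 : Real.logb 2 q < 0 := by
      rw [hlogq]
      have := div_pos hd0 hφ0
      linarith
    exact (Real.logb_neg_iff hb2 hq0).mp h1
  have hqa : q ^ a ≤ 1 / (n:ℝ) := by
    have h1 : Real.logb 2 (q ^ a) ≤ Real.logb 2 (1 / (n:ℝ)) := by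
      rw [Real.logb_pow, hlogq, Real.logb_div one_ne_zero (ne_of_gt hn0), Real.logb_one,
        ← hLdef]
      have h2 : L ≤ (a:ℝ) * (d / φ) := by
        have h3 : φ * L ≤ (a:ℝ) * d := (div_le_iff₀ hd0).mp haLB
        rw [mul_div_assoc'] at *
        rw [le_div_iff₀ hφ0]
        linarith [h3]
      linarith
    exact (Real.logb_le_logb hb2 (by positivity) (by positivity)).mp h1
  set Breal := 12 / φ * (n:ℝ) ^ (1 / φ) * Real.log (n:ℝ) with hBdef
  have hlogn0 : 0 < Real.log (n:ℝ) := Real.log_pos (by linarith)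
  have hlogn1 : 1 ≤ Real.log (n:ℝ) := by
    have h1 : Real.log (4:ℝ) ≤ Real.log (n:ℝ) := Real.log_le_log (by norm_num) hn4R
    rw [show (4:ℝ) = 2 ^ (2:ℕ) by norm_num, Real.log_pow] at h1
    push_cast at h1
    nlinarith [Real.log_two_gt_d9]
  have hB0 : 0 < Breal := by rw [hBdef]; positivity
  have hqB : q * Breal = 12 * Real.log (n:ℝ) := by
    rw [hq, hBdef]
    field_simp
  set K := ⌊Breal⌋₊ + 1 with hKdef
  have hBK : Breal < (K:ℝ) := by rw [hKdef]; push_cast; exact Nat.lt_floor_add_one _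
  have hφpow : φ ≤ (n:ℝ) ^ (1/φ) := by
    have h1 : q < 1 := hq1
    rw [hq, div_lt_one hnpow0] at h1
    linarith
  have h12B : 12 * Real.log (n:ℝ) ≤ Breal := by
    rw [hBdef, div_mul_eq_mul_div, div_mul_eq_mul_div, le_div_iff₀ hφ0]
    have h1 := mul_le_mul_of_nonneg_left hφpow
      (by positivity : (0:ℝ) ≤ 12 * Real.log (n:ℝ))
    linarith only [h1]
  have hpow_exp : (1-q)^K ≤ Real.exp (-(12 * Real.log (n:ℝ))) := by
    have h1 : (1-q) ≤ Real.exp (-q) := by linarith [Real.add_one_le_exp (-q)]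
    have h2 : (1-q)^K ≤ Real.exp (-q)^K := pow_le_pow_left₀ (by linarith) h1 K
    rw [← Real.exp_nat_mul] at h2
    refine h2.trans (Real.exp_le_exp.mpr ?_)
    have h3 : q * Breal ≤ q * (K:ℝ) := mul_le_mul_of_nonneg_left hBK.le hq0.le
    linarith only [h3, hqB]
  -- events
  set F : ℕ → Set Ω := fun y =>
    {ω | K ≤ (Finset.univ.filter (fun i => X i ω ∈ ({y} : Set ℕ))).card ∧
      ∀ i, X i ω ∈ ({y} : Set ℕ) ∪ Set.Iio y} with hFdef
  set Fa : Set Ω := {ω | K ≤ (Finset.univ.filter (fun i => X i ω ∈ Set.Ici a)).card ∧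
      ∀ i, X i ω ∈ Set.Ici a ∪ Set.Iio a} with hFadef
  set bad0 : Set Ω := ⋃ i, X i ⁻¹' {0} with hbad0def
  set bad : Set Ω := bad0 ∪ ((⋃ y ∈ Finset.Ico 1 a, F y) ∪ Fa) with hbaddef
  have hgeom' : ∀ (i : Fin nhat) (j : ℕ), 1 ≤ j →
      μ (X i ⁻¹' {j}) = ENNReal.ofReal ((1 - q) * q ^ (j - 1)) := fun i j hj => hgeom i j hj
  have hbad0 : μ bad0 = 0 := by
    rw [hbad0def]
    exact measure_iUnion_null fun i =>
      geo_zero μ (X i) (hmeas i) hq0 hq1 (fun j hj => hgeom' i j hj)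
  -- pointwise
  haveI : Nonempty (Fin nhat) := ⟨⟨0, hnhat1⟩⟩
  have hsub : ∀ ω, ω ∉ bad → ω ∈ {ω | ∃ y : ℕ, 1 ≤ y ∧ y ≤ a ∧
        1 ≤ (Finset.univ.filter (fun i : Fin nhat => min (X i ω) a = y)).card ∧
        ((Finset.univ.filter (fun i : Fin nhat => min (X i ω) a = y)).card : ℝ) ≤ Breal} := by
    intro ω hω
    rw [hbaddef] at hω
    simp only [Set.mem_union, not_or] at hω
    obtain ⟨h0, hFy, hFa'⟩ := hω
    have hX1 : ∀ i, 1 ≤ X i ω := by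
      intro i
      by_contra h
      refine h0 ?_
      rw [hbad0def]
      exact Set.mem_iUnion.mpr ⟨i, by
        simp only [Set.mem_preimage, Set.mem_singleton_iff]; omega⟩
    have hFy' : ∀ y ∈ Finset.Ico 1 a, ω ∉ F y := by
      intro y hy hmem
      exact hFy (Set.mem_iUnion₂.mpr ⟨y, hy, hmem⟩)
    obtain ⟨i₀, -, hi₀⟩ := Finset.exists_mem_eq_sup (Finset.univ : Finset (Fin nhat))
      Finset.univ_nonempty (fun i => min (X i ω) a)
    set y₀ := Finset.univ.sup (fun i => min (X i ω) a) with hy₀def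
    have hy₀1 : 1 ≤ y₀ := by rw [hi₀]; exact le_min (hX1 i₀) ha1
    have hy₀a : y₀ ≤ a := by rw [hi₀]; exact min_le_right _ _
    refine ⟨y₀, hy₀1, hy₀a, Finset.card_pos.mpr
      ⟨i₀, Finset.mem_filter.mpr ⟨Finset.mem_univ _, hi₀.symm⟩⟩, ?_⟩
    by_contra hcon
    push_neg at hcon
    have hKcard : K ≤ (Finset.univ.filter (fun i => min (X i ω) a = y₀)).card := by
      have h1 := (Nat.floor_lt hB0.le).mpr hcon
      rw [hKdef]; omega
    have hle : ∀ i, min (X i ω) a ≤ y₀ := fun i =>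
      Finset.le_sup (f := fun i => min (X i ω) a) (Finset.mem_univ i)
    rcases eq_or_lt_of_le hy₀a with heq | hlt
    · refine hFa' ?_
      rw [hFadef]
      refine ⟨le_trans hKcard (Finset.card_le_card ?_), fun i => ?_⟩
      · intro i hi
        simp only [Finset.mem_filter] at hi ⊢
        refine ⟨hi.1, ?_⟩
        have h2 := hi.2
        rw [heq] at h2
        simp only [Set.mem_Ici]
        omega
      · rcases le_or_gt a (X i ω) with h | h
        · exact Or.inl h
        · exact Or.inr h
    · refine hFy' y₀ (Finset.mem_Ico.mpr ⟨hy₀1, hlt⟩) ?_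
      rw [hFdef]
      refine ⟨le_trans hKcard (Finset.card_le_card ?_), fun i => ?_⟩
      · intro i hi
        simp only [Finset.mem_filter] at hi ⊢
        refine ⟨hi.1, ?_⟩
        have h2 := hi.2
        simp only [Set.mem_singleton_iff]
        omega
      · have h3 := hle i
        simp only [Set.mem_union, Set.mem_singleton_iff, Set.mem_Iio]
        omega
  -- measure bounds on F y and Fa
  have hq1y : ∀ y : ℕ, 0 ≤ q^(y-1) ∧ q^(y-1) ≤ 1 :=
    fun y => ⟨by positivity, pow_le_one₀ hq0.le hq1.le⟩
  have hFybound : ∀ y ∈ Finset.Ico 1 a, μ (F y) ≤ ENNReal.ofReal ((1-q)^K) := by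
    intro y hy
    obtain ⟨hy1, hya⟩ := Finset.mem_Ico.mp hy
    obtain ⟨hp0, hp1⟩ := hq1y y
    have happ := count_event_bound μ X hmeas hind ({y} : Set ℕ) (Set.Iio y)
      (fun x hx hx' => by
        simp only [Set.mem_singleton_iff] at hx
        simp only [Set.mem_Iio] at hx'
        omega)
      (α := (1-q)*q^(y-1)) (β := 1 - q^(y-1))
      (mul_nonneg (by linarith) hp0) (by linarith)
      (fun i => hgeom' i y hy1)
      (fun i => geo_lt μ (X i) (hmeas i) hq0 hq1 (fun j hj => hgeom' i j hj) y hy1)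
      K (ε := (1-q)^K) (γ := q^(y-1)) (δ := 1 - q^(y-1))
      hp0 (by linarith) (pow_nonneg (by linarith) K)
      (fun k hKk hkm => by
        have h1 : (1-q)^k ≤ (1-q)^K := pow_le_pow_of_le_one (by linarith) (by linarith) hKk
        calc ((1-q)*q^(y-1))^k * (1-q^(y-1))^(nhat-k)
            = (1-q)^k * ((q^(y-1))^k * (1-q^(y-1))^(nhat-k)) := by rw [mul_pow]; ring
          _ ≤ (1-q)^K * ((q^(y-1))^k * (1-q^(y-1))^(nhat-k)) :=
              mul_le_mul_of_nonneg_right h1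
                (mul_nonneg (pow_nonneg hp0 _) (pow_nonneg (by linarith) _)))
    have heq : (1-q)^K * (q^(y-1) + (1 - q^(y-1)))^nhat = (1-q)^K := by ring
    rw [heq] at happ
    exact happ
  have hFabound : μ Fa ≤ ENNReal.ofReal ((1/2:ℝ)^K * (1 + q^(a-1))^nhat) := by
    obtain ⟨hp0, hp1⟩ := hq1y a
    have happ := count_event_bound μ X hmeas hind (Set.Ici a) (Set.Iio a)
      (fun x hx hx' => by
        simp only [Set.mem_Ici] at hx
        simp only [Set.mem_Iio] at hx'
        omega)
      (α := q^(a-1)) (β := 1 - q^(a-1)) hp0 (by linarith)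
      (fun i => geo_ge μ (X i) (hmeas i) hq0 hq1 (fun j hj => hgeom' i j hj) a ha1)
      (fun i => geo_lt μ (X i) (hmeas i) hq0 hq1 (fun j hj => hgeom' i j hj) a ha1)
      K (ε := (1/2:ℝ)^K) (γ := 2*q^(a-1)) (δ := 1 - q^(a-1))
      (by positivity) (by linarith) (by positivity)
      (fun k hKk hkm => by
        have h1 : ((1:ℝ)/2)^k ≤ (1/2:ℝ)^K :=
          pow_le_pow_of_le_one (by norm_num) (by norm_num) hKk
        have h2 : (0:ℝ) ≤ (2:ℝ)^k * ((q^(a-1))^k * (1-q^(a-1))^(nhat-k)) := by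
          refine mul_nonneg (by positivity) (mul_nonneg (by positivity) (pow_nonneg (by linarith) _))
        calc (q^(a-1))^k * (1-q^(a-1))^(nhat-k)
            = ((1:ℝ)/2)^k * ((2:ℝ)^k * ((q^(a-1))^k * (1-q^(a-1))^(nhat-k))) := by
              rw [← mul_assoc, ← mul_pow]
              norm_num
          _ ≤ (1/2:ℝ)^K * ((2:ℝ)^k * ((q^(a-1))^k * (1-q^(a-1))^(nhat-k))) :=
              mul_le_mul_of_nonneg_right h1 h2
          _ = (1/2:ℝ)^K * ((2*q^(a-1))^k * (1-q^(a-1))^(nhat-k)) := by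
              rw [mul_pow]; ring)
    have heq : 2*q^(a-1) + (1 - q^(a-1)) = 1 + q^(a-1) := by ring
    rw [heq] at happ
    exact happ
  -- total bad measure
  have hbadm : μ bad ≤ ENNReal.ofReal (2/(n:ℝ)^2) := by
    have hchain : μ bad ≤ ∑ y ∈ Finset.Ico 1 a, μ (F y) + μ Fa := by
      calc μ bad ≤ μ bad0 + μ ((⋃ y ∈ Finset.Ico 1 a, F y) ∪ Fa) := by
            rw [hbaddef]; exact measure_union_le _ _
        _ = μ ((⋃ y ∈ Finset.Ico 1 a, F y) ∪ Fa) := by rw [hbad0, zero_add]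
        _ ≤ μ (⋃ y ∈ Finset.Ico 1 a, F y) + μ Fa := measure_union_le _ _
        _ ≤ ∑ y ∈ Finset.Ico 1 a, μ (F y) + μ Fa :=
            add_le_add_left (measure_biUnion_finset_le _ _) _
    rcases le_or_gt 16 n with h16 | h15
    · -- main case
      have h16R : (16:ℝ) ≤ (n:ℝ) := by exact_mod_cast h16
      have hlog2 := Real.log_two_gt_d9
      have hlogn27 : 2.7 ≤ Real.log (n:ℝ) := by
        have h1 : Real.log (16:ℝ) ≤ Real.log (n:ℝ) := Real.log_le_log (by norm_num) h16R
        rw [show (16:ℝ) = 2 ^ (4:ℕ) by norm_num, Real.log_pow] at h1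
        push_cast at h1
        linarith only [h1, Real.log_two_gt_d9]
      have hL4 : 4 ≤ L := by
        rw [hLdef, show (4:ℝ) = Real.logb 2 (2^(4:ℕ)) by
          rw [Real.logb_pow, Real.logb_self_eq_one hb2]; norm_num]
        exact Real.logb_le_logb_of_le hb2 (by norm_num) (by exact_mod_cast h16)
      have hl2 : 2 ≤ l := by
        rw [hldef]
        calc (2:ℝ) = Real.logb 2 (4:ℝ) := h42.symm
          _ ≤ Real.logb 2 L := Real.logb_le_logb_of_le hb2 (by norm_num) hL4
      have hlogl1 : 1 ≤ Real.logb 2 l := by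
        rw [← Real.logb_self_eq_one hb2]
        exact Real.logb_le_logb_of_le hb2 (by norm_num) hl2
      have hφ1L : φ * (1 + Real.logb 2 φ) ≤ L := by
        have h1 := mul_lt_mul_of_pos_left hlogφ hφ0
        have h2 := mul_le_mul_of_nonneg_left hlogl1 hφ0.le
        nlinarith only [h1, h2, hφl]
      have hq12 : q ≤ 1/2 := by
        have h2φ : (2:ℝ)*φ ≤ (n:ℝ)^(1/φ) := by
          have hlog : Real.logb 2 ((2:ℝ)*φ) ≤ Real.logb 2 ((n:ℝ)^(1/φ)) := by
            rw [hlogn_pow, Real.logb_mul two_ne_zero (ne_of_gt hφ0),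
              Real.logb_self_eq_one hb2]
            rw [le_div_iff₀ hφ0]
            nlinarith only [hφ1L]

          exact (Real.logb_le_logb hb2 (by positivity) (by positivity)).mp hlog
        rw [hq, div_le_iff₀ hnpow0]
        linarith
      have hφd : φ ≤ d := by rw [hddef]; nlinarith only [hφ1L]
      have haL1 : (a:ℝ) ≤ L + 1 := by
        have h1 : φ * L / d ≤ L := by
          rw [div_le_iff₀ hd0]
          calc φ * L ≤ d * L := mul_le_mul_of_nonneg_right hφd hL0.le
            _ = L * d := mul_comm _ _
        have h2 : (⌈φ*L/d⌉₊:ℝ) < φ*L/d + 1 := Nat.ceil_lt_add_one hx0.le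
        rw [ha]
        linarith
      -- E1
      have hE1 : ((a-1:ℕ):ℝ) * (1-q)^K ≤ 1/(n:ℝ)^2 := by
        have hAle : ((a-1:ℕ):ℝ) ≤ L + 1 := by
          refine le_trans ?_ haL1
          exact_mod_cast Nat.sub_le a 1
        have hL3 : L + 1 ≤ 3*Real.log (n:ℝ) := by
          have hLval : L * Real.log 2 = Real.log (n:ℝ) := by
            rw [hLdef, Real.logb]
            field_simp
          have hA : L * (0.6931471803:ℝ) ≤ L * Real.log 2 :=
            mul_le_mul_of_nonneg_left Real.log_two_gt_d9.le (by linarith only [hL0])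
          linarith only [hA, hLval, hlogn27, hL0]
        have hexpval : Real.exp (-(12*Real.log (n:ℝ))) = ((n:ℝ)^(12:ℕ))⁻¹ := by
          rw [Real.exp_neg]
          congr 1
          rw [show (12:ℝ)*Real.log (n:ℝ) = ((12:ℕ):ℝ)*Real.log (n:ℝ) by norm_num,
            Real.exp_nat_mul, Real.exp_log hn0]
        have hnn : 3*Real.log (n:ℝ) * (n:ℝ)^2 ≤ (n:ℝ)^(12:ℕ) := by
          have hlogle : Real.log (n:ℝ) ≤ (n:ℝ) := by
            linarith only [Real.log_le_sub_one_of_pos hn0, hn0]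
          have h1 : 3*Real.log (n:ℝ)*(n:ℝ)^2 ≤ 3*(n:ℝ)*(n:ℝ)^2 :=
            mul_le_mul_of_nonneg_right (by linarith only [hlogle]) (sq_nonneg _)
          have h9 : (3:ℝ) ≤ (n:ℝ)^(9:ℕ) :=
            le_trans (by norm_num) (pow_le_pow_left₀ (by norm_num) hn4R 9)
          have h2 : 3*(n:ℝ)^(3:ℕ) ≤ (n:ℝ)^(9:ℕ) * (n:ℝ)^(3:ℕ) :=
            mul_le_mul_of_nonneg_right h9 (by positivity)
          calc 3*Real.log (n:ℝ)*(n:ℝ)^2 ≤ 3*(n:ℝ)*(n:ℝ)^2 := h1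
            _ = 3*(n:ℝ)^(3:ℕ) := by ring
            _ ≤ (n:ℝ)^(9:ℕ)*(n:ℝ)^(3:ℕ) := h2
            _ = (n:ℝ)^(12:ℕ) := by ring
        have h12pos : (0:ℝ) < (n:ℝ)^(12:ℕ) := by positivity
        calc ((a-1:ℕ):ℝ) * (1-q)^K
            ≤ (3*Real.log (n:ℝ)) * ((n:ℝ)^(12:ℕ))⁻¹ := by
              refine mul_le_mul (hAle.trans hL3) ?_ (pow_nonneg (by linarith only [hq1]) K)
                (by linarith only [hlogn0])
              rw [← hexpval]; exact hpow_exp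
          _ ≤ 1/(n:ℝ)^2 := by
              rw [inv_eq_one_div, mul_one_div, div_le_div_iff₀ h12pos (by positivity)]
              linarith only [hnn]
      -- E2
      have hE2 : (1/2:ℝ)^K * (1 + q^(a-1))^nhat ≤ 1/(n:ℝ)^2 := by
        obtain ⟨hp0, hp1⟩ := hq1y a
        have hqa' : q^a = q^(a-1) * q := by
          rw [← pow_succ]
          congr 1
          omega
        have hpq : (nhat:ℝ) * (q^(a-1) * q) ≤ 1 := by
          have h1 : (nhat:ℝ) * q^a ≤ (n:ℝ) * (1/(n:ℝ)) :=
            mul_le_mul (by exact_mod_cast hnhat2) hqa (by positivity) hn0.le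
          rw [hqa'] at h1
          have h2 : (n:ℝ) * (1/(n:ℝ)) = 1 := by field_simp
          linarith only [h1, h2]
        have hnp : (nhat:ℝ) * q^(a-1) ≤ 1/q := by
          rw [le_div_iff₀ hq0]
          nlinarith only [hpq]

        have h1p : (1 + q^(a-1))^nhat ≤ Real.exp (1/q) := by
          have h2 : (1 + q^(a-1))^nhat ≤ Real.exp (q^(a-1)) ^ nhat :=
            pow_le_pow_left₀ (by linarith only [hp0])
              (by linarith only [Real.add_one_le_exp (q^(a-1))]) nhat
          rw [← Real.exp_nat_mul] at h2
          exact h2.trans (Real.exp_le_exp.mpr hnp)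
        have hhalf : (1/2:ℝ)^K = Real.exp (-((K:ℝ) * Real.log 2)) := by
          rw [show (1/2:ℝ) = Real.exp (-(Real.log 2)) by
            rw [Real.exp_neg, Real.exp_log two_pos]; norm_num,
            ← Real.exp_nat_mul]
          congr 1
          ring
        have hkey : 1/q + 2*Real.log (n:ℝ) ≤ (K:ℝ)*Real.log 2 := by
          have h3 : q*Breal ≤ q*(K:ℝ) := mul_le_mul_of_nonneg_left hBK.le hq0.le
          rw [hqB] at h3
          have h5 : 1 + 2*Real.log (n:ℝ)*q ≤ q*(K:ℝ)*Real.log 2 := by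
            have hlog2pos : (0.6931471803:ℝ) < Real.log 2 := Real.log_two_gt_d9
            have A2 : 12*Real.log (n:ℝ)*Real.log 2 ≤ q*(K:ℝ)*Real.log 2 :=
              mul_le_mul_of_nonneg_right h3 (by linarith)
            have A3 : 12*Real.log (n:ℝ)*(0.6931471803:ℝ) ≤ 12*Real.log (n:ℝ)*Real.log 2 :=
              mul_le_mul_of_nonneg_left hlog2pos.le (by linarith)
            have A4 : 2*Real.log (n:ℝ)*q ≤ 2*Real.log (n:ℝ)*(1/2) :=
              mul_le_mul_of_nonneg_left hq12 (by linarith)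
            linarith only [A2, A3, A4, hlogn1]
          calc 1/q + 2*Real.log (n:ℝ) = (1 + 2*Real.log (n:ℝ)*q)/q := by
                field_simp
                try ring
            _ ≤ (q*(K:ℝ)*Real.log 2)/q := by gcongr
            _ = (K:ℝ)*Real.log 2 := by field_simp; try ring
        calc (1/2:ℝ)^K * (1 + q^(a-1))^nhat
            ≤ Real.exp (-((K:ℝ)*Real.log 2)) * Real.exp (1/q) := by
              rw [hhalf]
              exact mul_le_mul_of_nonneg_left h1p (Real.exp_nonneg _)
          _ = Real.exp (1/q - (K:ℝ)*Real.log 2) := by rw [← Real.exp_add]; congr 1; ring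
          _ ≤ Real.exp (-(2*Real.log (n:ℝ))) := Real.exp_le_exp.mpr (by linarith only [hkey])
          _ = 1/(n:ℝ)^2 := by
              rw [Real.exp_neg, show (2:ℝ)*Real.log (n:ℝ) = ((2:ℕ):ℝ)*Real.log (n:ℝ) by norm_num,
                Real.exp_nat_mul, Real.exp_log hn0, one_div]
      have hRkey : ((a-1:ℕ):ℝ) * (1-q)^K + (1/2:ℝ)^K * (1 + q^(a-1))^nhat ≤ 2/(n:ℝ)^2 := by
        have : 1/(n:ℝ)^2 + 1/(n:ℝ)^2 = 2/(n:ℝ)^2 := by ring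
        linarith only [hE1, hE2, this]
      refine hchain.trans ?_
      calc ∑ y ∈ Finset.Ico 1 a, μ (F y) + μ Fa
          ≤ ∑ _y ∈ Finset.Ico 1 a, ENNReal.ofReal ((1-q)^K)
            + ENNReal.ofReal ((1/2:ℝ)^K * (1 + q^(a-1))^nhat) :=
            add_le_add (Finset.sum_le_sum hFybound) hFabound
        _ = ((a-1:ℕ) : ENNReal) * ENNReal.ofReal ((1-q)^K)
            + ENNReal.ofReal ((1/2:ℝ)^K * (1 + q^(a-1))^nhat) := by
            rw [Finset.sum_const, Nat.card_Ico, nsmul_eq_mul]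
        _ = ENNReal.ofReal (((a-1:ℕ):ℝ) * (1-q)^K)
            + ENNReal.ofReal ((1/2:ℝ)^K * (1 + q^(a-1))^nhat) := by
            rw [← ENNReal.ofReal_natCast (a-1), ← ENNReal.ofReal_mul (Nat.cast_nonneg _)]
        _ = ENNReal.ofReal (((a-1:ℕ):ℝ) * (1-q)^K + (1/2:ℝ)^K * (1 + q^(a-1))^nhat) := by
            rw [← ENNReal.ofReal_add (mul_nonneg (Nat.cast_nonneg _) (pow_nonneg (by linarith only [hq1]) _))
              (mul_nonneg (by positivity) (pow_nonneg (by positivity) _))]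
        _ ≤ ENNReal.ofReal (2/(n:ℝ)^2) := ENNReal.ofReal_le_ofReal hRkey
    · -- trivial case n ≤ 15
      have hn15 : (nhat:ℝ) ≤ 15 := by
        have : nhat ≤ 15 := by omega
        exact_mod_cast this
      have hBn : (nhat:ℝ) ≤ Breal := by
        have hlog4 : 2*Real.log 2 ≤ Real.log (n:ℝ) := by
          have h1 : Real.log (4:ℝ) ≤ Real.log (n:ℝ) := Real.log_le_log (by norm_num) hn4R
          rwa [show (4:ℝ) = 2 ^ (2:ℕ) by norm_num, Real.log_pow, Nat.cast_ofNat] at h1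
        linarith only [Real.log_two_gt_d9, h12B, hn15, hlog4]
      have hKn : nhat < K := by
        have h1 : nhat ≤ ⌊Breal⌋₊ := Nat.le_floor hBn
        rw [hKdef]; omega
      have hcard : ∀ (p : Fin nhat → Prop) [DecidablePred p],
          (Finset.univ.filter p).card ≤ nhat := by
        intro p _
        calc (Finset.univ.filter p).card ≤ (Finset.univ : Finset (Fin nhat)).card :=
            Finset.card_filter_le _ _
          _ = nhat := by rw [Finset.card_univ, Fintype.card_fin]
      have hFy0 : ∀ y ∈ Finset.Ico 1 a, μ (F y) = 0 := by
        intro y _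
        have : F y = ∅ := by
          rw [hFdef]
          ext ω
          simp only [Set.mem_setOf_eq, Set.mem_empty_iff_false, iff_false, not_and]
          intro hK
          exact absurd (le_trans hK (hcard _)) (by omega)
        rw [this, measure_empty]
      have hFa0 : μ Fa = 0 := by
        have : Fa = ∅ := by
          rw [hFadef]
          ext ω
          simp only [Set.mem_setOf_eq, Set.mem_empty_iff_false, iff_false, not_and]
          intro hK
          exact absurd (le_trans hK (hcard _)) (by omega)
        rw [this, measure_empty]
      refine hchain.trans ?_
      rw [Finset.sum_congr rfl hFy0, Finset.sum_const, hFa0]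
      simp
  -- conclusion
  calc 1 - ENNReal.ofReal (2/(n:ℝ)^2) ≤ 1 - μ bad := tsub_le_tsub_left hbadm 1
    _ ≤ μ badᶜ := by
        rw [tsub_le_iff_right]
        calc (1:ENNReal) = μ Set.univ := (measure_univ (μ := μ)).symm
          _ = μ (badᶜ ∪ bad) := by rw [Set.compl_union_self]
          _ ≤ μ badᶜ + μ bad := measure_union_le _ _
    _ ≤ μ _ := measure_mono (fun ω hω => hsub ω hω)
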